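/- Let 𝕋 = {t_i}_{i=0,…,N} be a partition of [0,T], (x,u) admissible for the sampled-data problem with u constant equal to u_i on [t_i,t_{i+1}), and (p,p⁰) ∈ AC × ℝ_- a nontrivial pair satisfying the adjoint equation. Then the averaged Hamiltonian gradient condition ∫_{t_i}^{t_{i+1}} ∇_u H(x(s),u_i,p(s),p⁰,s) ds ∈ N_U[u_i] holds for every i ∈ {0,…,N−1} if and only if ⟨p(T), w(T,u,v−u)⟩ + p⁰ w⁰(T,u,v−u) ≤ 0 for every piecewise constant v ∈ PC^𝕋 with values in U. -/

import Mathlib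

open MeasureTheory Set Filter Topology
open scoped RealInnerProductSpace

section Helpers

lemma inner_gradient_eq {F : Type*} [NormedAddCommGroup F] [InnerProductSpace ℝ F]
    [CompleteSpace F] (f : F → ℝ) (x v : F) :
    ⟪gradient f x, v⟫ = fderiv ℝ f x v := by
  have : (InnerProductSpace.toDual ℝ F) (gradient f x) v = fderiv ℝ f x v := by
    rw [gradient, LinearIsometryEquiv.apply_symm_apply]
  simpa [InnerProductSpace.toDual_apply_apply] using this

lemma ae_Ioo_of_Ioc {a b : ℝ} :
    ∀ᵐ s ∂(volume.restrict (Ioc a b)), s ∈ Ioo a b := by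
  have h1 : ∀ᵐ s ∂(volume.restrict (Ioc a b)), s ∈ Ioc a b :=
    ae_restrict_mem measurableSet_Ioc
  have h2 : ∀ᵐ s ∂(volume.restrict (Ioc a b)), s ≠ b := by
    rw [ae_iff]
    have : {s : ℝ | ¬ s ≠ b} = {b} := by ext s; simp
    rw [this]
    exact le_antisymm ((Measure.restrict_apply_le _ _).trans (by simp)) bot_le
  filter_upwards [h1, h2] with s hs hsb
  exact ⟨hs.1, lt_of_le_of_ne hs.2 hsb⟩
lemma parts_lemma {E : Type*} [NormedAddCommGroup E] [InnerProductSpace ℝ E]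
    [CompleteSpace E] (T : ℝ) (a b : ℝ → E)
    (ha : IntegrableOn a (Ioc 0 T)) (hb : IntegrableOn b (Ioc 0 T)) (P0 : E) :
    ⟪P0 + ∫ s in Ioc (0:ℝ) T, a s, ∫ s in Ioc (0:ℝ) T, b s⟫ =
      ∫ s in Ioc (0:ℝ) T,
        (⟪a s, ∫ r in Ioc (0:ℝ) s, b r⟫ + ⟪P0 + ∫ r in Ioc (0:ℝ) s, a r, b s⟫) := by
  set μ := volume.restrict (Ioc (0:ℝ) T) with hμ
  set K : ℝ × ℝ → ℝ := fun z => ⟪a z.1, b z.2⟫ with hK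
  have hKm : AEStronglyMeasurable K (μ.prod μ) :=
    (ha.aestronglyMeasurable.comp_fst).inner (hb.aestronglyMeasurable.comp_snd)
  have hKi : Integrable K (μ.prod μ) := by
    refine Integrable.mono' (ha.norm.mul_prod hb.norm) hKm ?_
    exact Eventually.of_forall fun z => by
      simpa using norm_inner_le_norm (𝕜 := ℝ) (a z.1) (b z.2)
  have hsetF : MeasurableSet {z : ℝ × ℝ | z.2 ≤ z.1} :=
    measurableSet_le measurable_snd measurable_fst
  have hsetG : MeasurableSet {z : ℝ × ℝ | z.1 ≤ z.2} :=
    measurableSet_le measurable_fst measurable_snd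
  set F : ℝ × ℝ → ℝ := {z : ℝ × ℝ | z.2 ≤ z.1}.indicator K with hF
  set G : ℝ × ℝ → ℝ := {z : ℝ × ℝ | z.1 ≤ z.2}.indicator K with hG
  have hFi : Integrable F (μ.prod μ) := hKi.indicator hsetF
  have hGi : Integrable G (μ.prod μ) := hKi.indicator hsetG
  -- rewrite RHS integrand
  have hrw : ∀ s ∈ Ioc (0:ℝ) T,
      ⟪a s, ∫ r in Ioc (0:ℝ) s, b r⟫ + ⟪P0 + ∫ r in Ioc (0:ℝ) s, a r, b s⟫
        = (∫ r, F (s, r) ∂μ) + (⟪P0, b s⟫ + ∫ r, G (r, s) ∂μ) := by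
    intro s hs
    have hsub : Ioc (0:ℝ) s ⊆ Ioc (0:ℝ) T := Ioc_subset_Ioc le_rfl hs.2
    have hIic : Iic s ∩ Ioc (0:ℝ) T = Ioc (0:ℝ) s := by
      ext r
      simp only [mem_inter_iff, mem_Iic, mem_Ioc]
      exact ⟨fun ⟨h1, h2, _⟩ => ⟨h2, h1⟩, fun ⟨h1, h2⟩ => ⟨h2, h1, h2.trans hs.2⟩⟩
    have hbs : IntegrableOn b (Ioc (0:ℝ) s) := hb.mono_set hsub
    have has : IntegrableOn a (Ioc (0:ℝ) s) := ha.mono_set hsub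
    have e1 : (∫ r, F (s, r) ∂μ) = ⟪a s, ∫ r in Ioc (0:ℝ) s, b r⟫ := by
      have hfe : (fun r => F (s, r)) = (Iic s).indicator (fun r => ⟪a s, b r⟫) := by
        ext r; simp [hF, hK, Set.indicator_apply, Set.mem_Iic]
      rw [hμ, hfe, MeasureTheory.integral_indicator measurableSet_Iic,
        Measure.restrict_restrict measurableSet_Iic, hIic, integral_inner hbs]
    have e2 : (∫ r, G (r, s) ∂μ) = ⟪∫ r in Ioc (0:ℝ) s, a r, b s⟫ := by
      have hfe : (fun r => G (r, s)) = (Iic s).indicator (fun r => ⟪b s, a r⟫) := by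
        ext r
        simp [hG, hK, Set.indicator_apply, Set.mem_Iic, real_inner_comm (a r) (b s)]
      rw [hμ, hfe, MeasureTheory.integral_indicator measurableSet_Iic,
        Measure.restrict_restrict measurableSet_Iic, hIic, integral_inner has,
        real_inner_comm]
    rw [e1, e2, inner_add_left]
  -- Fubini facts
  have hFtot : (∫ s, (∫ r, F (s, r) ∂μ) ∂μ) = ∫ z, F z ∂(μ.prod μ) :=
    (integral_prod _ hFi).symm
  have hGtot : (∫ s, (∫ r, G (r, s) ∂μ) ∂μ) = ∫ z, G z ∂(μ.prod μ) :=
    (integral_prod_symm _ hGi).symm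
  have hFm : Integrable (fun s => ∫ r, F (s, r) ∂μ) μ := hFi.integral_prod_left
  have hPb : Integrable (fun s => ⟪P0, b s⟫) μ := by
    have := (innerSL ℝ P0).integrable_comp hb
    simpa using this
  have hGm : Integrable (fun s => ∫ r, G (r, s) ∂μ) μ := hGi.integral_prod_right
  have hsum : (∫ z, F z ∂(μ.prod μ)) + (∫ z, G z ∂(μ.prod μ)) = ∫ z, K z ∂(μ.prod μ) := by
    rw [← integral_add hFi hGi]
    have hdiag : ∀ᵐ z ∂(μ.prod μ), F z + G z = K z := by
      have hnull : (μ.prod μ) {z : ℝ × ℝ | z.1 = z.2} = 0 := by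
        rw [Measure.prod_apply (measurableSet_eq_fun measurable_fst measurable_snd)]
        have : ∀ x : ℝ, μ (Prod.mk x ⁻¹' {z : ℝ × ℝ | z.1 = z.2}) = 0 := by
          intro x
          have : Prod.mk x ⁻¹' {z : ℝ × ℝ | z.1 = z.2} = {x} := by
            ext y; simp [eq_comm]
          rw [this]
          exact le_antisymm ((Measure.restrict_apply_le _ _).trans (by simp)) bot_le
        simp [this]
      have : ∀ᵐ z ∂(μ.prod μ), ¬ (z.1 = z.2) := by
        rw [ae_iff]; simpa using hnull
      filter_upwards [this] with z hz
      rcases lt_or_gt_of_ne hz with h | h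
      · simp [hF, hG, Set.indicator_apply, le_of_lt h, not_le.mpr h]
      · simp [hF, hG, Set.indicator_apply, le_of_lt h, not_le.mpr h]
    exact integral_congr_ae hdiag
  have hKval : (∫ z, K z ∂(μ.prod μ)) = ⟪∫ s, a s ∂μ, ∫ r, b r ∂μ⟫ := by
    rw [integral_prod _ hKi]
    have h1 : ∀ s, (∫ r, ⟪a s, b r⟫ ∂μ) = ⟪a s, ∫ r, b r ∂μ⟫ := fun s => integral_inner hb _
    rw [integral_congr_ae (Eventually.of_forall fun s => h1 s)]
    rw [show (fun s => ⟪a s, ∫ r, b r ∂μ⟫) = fun s => ⟪(∫ r, b r ∂μ), a s⟫ from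
      funext fun s => real_inner_comm _ _]
    rw [integral_inner ha, real_inner_comm]
  have hP0 : (∫ s, ⟪P0, b s⟫ ∂μ) = ⟪P0, ∫ s, b s ∂μ⟫ := integral_inner hb _
  have hPbG : Integrable (fun s => ⟪P0, b s⟫ + ∫ r, G (r, s) ∂μ) μ := hPb.add hGm
  rw [setIntegral_congr_fun measurableSet_Ioc hrw, ← hμ,
    integral_add hFm hPbG, integral_add hPb hGm, hFtot, hGtot, inner_add_left, hP0]
  linarith [hsum, hKval]
lemma pointwise_H {n m : ℕ}
    (f : EuclideanSpace ℝ (Fin n) → EuclideanSpace ℝ (Fin m) → ℝ → EuclideanSpace ℝ (Fin n))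
    (L : EuclideanSpace ℝ (Fin n) → EuclideanSpace ℝ (Fin m) → ℝ → ℝ)
    (hf : ContDiff ℝ 2 (fun q : EuclideanSpace ℝ (Fin n) × EuclideanSpace ℝ (Fin m) × ℝ =>
      f q.1 q.2.1 q.2.2))
    (hL : ContDiff ℝ 2 (fun q : EuclideanSpace ℝ (Fin n) × EuclideanSpace ℝ (Fin m) × ℝ =>
      L q.1 q.2.1 q.2.2))
    (p0 : ℝ) (s : ℝ) (ps xs W : EuclideanSpace ℝ (Fin n)) (us d : EuclideanSpace ℝ (Fin m)) :
    ⟪-(gradient (fun y => ⟪ps, f y us s⟫) xs) - p0 • gradient (fun y => L y us s) xs, W⟫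
      + ⟪ps, (fderiv ℝ (fun y => f y us s) xs) W + (fderiv ℝ (fun ω => f xs ω s) us) d⟫
      + p0 * (⟪gradient (fun y => L y us s) xs, W⟫ + ⟪gradient (fun ω => L xs ω s) us, d⟫)
      = ⟪gradient (fun ψ => ⟪ps, f xs ψ s⟫ + p0 * L xs ψ s) us, d⟫ := by
  have hfd : Differentiable ℝ (fun q : EuclideanSpace ℝ (Fin n) × EuclideanSpace ℝ (Fin m) × ℝ =>
      f q.1 q.2.1 q.2.2) := hf.differentiable (by norm_num)
  have hLd : Differentiable ℝ (fun q : EuclideanSpace ℝ (Fin n) × EuclideanSpace ℝ (Fin m) × ℝ =>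
      L q.1 q.2.1 q.2.2) := hL.differentiable (by norm_num)
  have hx_f : DifferentiableAt ℝ (fun y => f y us s) xs :=
    (hfd _).comp xs (differentiableAt_id.prodMk (differentiableAt_const (us, s)))
  have hm_f : DifferentiableAt ℝ (fun ω => f xs ω s) us :=
    (hfd _).comp us ((differentiableAt_const xs).prodMk
      (differentiableAt_id.prodMk (differentiableAt_const s)))
  have hm_L : DifferentiableAt ℝ (fun ω => L xs ω s) us :=
    (hLd _).comp us ((differentiableAt_const xs).prodMk
      (differentiableAt_id.prodMk (differentiableAt_const s)))
  have eA : ⟪gradient (fun y => ⟪ps, f y us s⟫) xs, W⟫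
      = ⟪ps, (fderiv ℝ (fun y => f y us s) xs) W⟫ := by
    rw [inner_gradient_eq]
    rw [fderiv_inner_apply ℝ (differentiableAt_const ps) hx_f]
    simp
  have hinner_diff : DifferentiableAt ℝ (fun ψ => ⟪ps, f xs ψ s⟫) us :=
    (differentiableAt_const ps).inner ℝ hm_f
  have hmul_diff : DifferentiableAt ℝ (fun ψ => p0 * L xs ψ s) us :=
    hm_L.const_mul p0
  have eB : ⟪gradient (fun ψ => ⟪ps, f xs ψ s⟫ + p0 * L xs ψ s) us, d⟫
      = ⟪ps, (fderiv ℝ (fun ω => f xs ω s) us) d⟫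
        + p0 * ⟪gradient (fun ω => L xs ω s) us, d⟫ := by
    rw [inner_gradient_eq, fderiv_fun_add hinner_diff hmul_diff]
    simp only [ContinuousLinearMap.add_apply]
    rw [fderiv_inner_apply ℝ (differentiableAt_const ps) hm_f, fderiv_const_mul hm_L]
    rw [inner_gradient_eq]
    simp
  rw [inner_sub_left, inner_neg_left, real_inner_smul_left, inner_add_right, eA, eB,
    inner_gradient_eq, inner_gradient_eq]
  ring

end Helpers


/-- Characterization of 𝕋-averaged weak extremal lifts (sampled-data case): the averaged
Hamiltonian gradient condition `∫_{t_i}^{t_{i+1}} ∇_u H ds ∈ N_U[u_i]` for all `i` holds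
if and only if `⟨p(T), w(T,u,v−u)⟩ + p⁰ w⁰(T,u,v−u) ≤ 0` for every piecewise constant
`v ∈ PC^𝕋` with values in `U`. -/
theorem stmt_11 (T : ℝ) (hT : 0 < T) (n m : ℕ) (hn : 0 < n) (hm : 0 < m)
    (x0 xT : EuclideanSpace ℝ (Fin n))
    (U : Set (EuclideanSpace ℝ (Fin m))) (hUne : U.Nonempty)
    (hUclosed : IsClosed U) (hUconvex : Convex ℝ U)
    (f : EuclideanSpace ℝ (Fin n) → EuclideanSpace ℝ (Fin m) → ℝ → EuclideanSpace ℝ (Fin n))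
    (L : EuclideanSpace ℝ (Fin n) → EuclideanSpace ℝ (Fin m) → ℝ → ℝ)
    (hf : ContDiff ℝ 2 (fun q : EuclideanSpace ℝ (Fin n) × EuclideanSpace ℝ (Fin m) × ℝ =>
      f q.1 q.2.1 q.2.2))
    (hL : ContDiff ℝ 2 (fun q : EuclideanSpace ℝ (Fin n) × EuclideanSpace ℝ (Fin m) × ℝ =>
      L q.1 q.2.1 q.2.2))
    -- the partition 𝕋 = {t_i}
    (N : ℕ) (hN : 0 < N) (t : ℕ → ℝ) (ht0 : t 0 = 0) (htN : t N = T)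
    (htmono : ∀ i < N, t i < t (i + 1))
    -- the class PC^𝕋_U of piecewise constant controls with values in U
    (PCU : (ℝ → EuclideanSpace ℝ (Fin m)) → Prop)
    (hPCU : ∀ v, PCU v ↔
      ((∀ i < N, ∀ s ∈ Ico (t i) (t (i + 1)), v s = v (t i)) ∧
       ∀ s ∈ Icc (0:ℝ) T, v s ∈ U))
    -- the admissible pair (x,u) with u piecewise constant
    (x : ℝ → EuclideanSpace ℝ (Fin n)) (u : ℝ → EuclideanSpace ℝ (Fin m))
    (hu : PCU u)
    (hubdd : ∃ Mu, ∀ᵐ s ∂(volume.restrict (Icc (0:ℝ) T)), ‖u s‖ ≤ Mu)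
    (hxint : IntegrableOn (fun s => f (x s) (u s) s) (Icc 0 T))
    (hxode : ∀ τ ∈ Icc (0:ℝ) T, x τ = x0 + ∫ s in (0:ℝ)..τ, f (x s) (u s) s)
    (hxT : x T = xT)
    -- the nontrivial pair (p,p⁰) satisfying the adjoint equation
    (p : ℝ → EuclideanSpace ℝ (Fin n)) (p0 : ℝ) (hp0 : p0 ≤ 0)
    (hnontriv : ¬ (p0 = 0 ∧ ∀ τ ∈ Icc (0:ℝ) T, p τ = 0))
    (hpint : IntegrableOn (fun s =>
      -(gradient (fun y => ⟪p s, f y (u s) s⟫) (x s))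
        - p0 • gradient (fun y => L y (u s) s) (x s)) (Icc 0 T))
    (hpode : ∀ τ ∈ Icc (0:ℝ) T, p τ = p 0 + ∫ s in (0:ℝ)..τ,
      (-(gradient (fun y => ⟪p s, f y (u s) s⟫) (x s))
        - p0 • gradient (fun y => L y (u s) s) (x s)))
    -- integrability of the Hamiltonian u-gradient along the extremal
    (hHint : IntegrableOn (fun s =>
      gradient (fun ψ => ⟪p s, f (x s) ψ s⟫ + p0 * L (x s) ψ s) (u s)) (Icc 0 T))
    -- the variation vectors w(·,u,v−u) and w⁰(·,u,v−u)
    (w : (ℝ → EuclideanSpace ℝ (Fin m)) → ℝ → EuclideanSpace ℝ (Fin n))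
    (w0 : (ℝ → EuclideanSpace ℝ (Fin m)) → ℝ → ℝ)
    (hwint : ∀ v, PCU v → IntegrableOn (fun s =>
      (fderiv ℝ (fun y => f y (u s) s) (x s)) (w v s)
        + (fderiv ℝ (fun ω => f (x s) ω s) (u s)) (v s - u s)) (Icc 0 T))
    (hw : ∀ v, PCU v → ∀ τ ∈ Icc (0:ℝ) T, w v τ = ∫ s in (0:ℝ)..τ,
      ((fderiv ℝ (fun y => f y (u s) s) (x s)) (w v s)
        + (fderiv ℝ (fun ω => f (x s) ω s) (u s)) (v s - u s)))
    (hw0int : ∀ v, PCU v → IntegrableOn (fun s =>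
      ⟪gradient (fun y => L y (u s) s) (x s), w v s⟫
        + ⟪gradient (fun ω => L (x s) ω s) (u s), v s - u s⟫) (Icc 0 T))
    (hw0 : ∀ v, PCU v → ∀ τ ∈ Icc (0:ℝ) T, w0 v τ = ∫ s in (0:ℝ)..τ,
      (⟪gradient (fun y => L y (u s) s) (x s), w v s⟫
        + ⟪gradient (fun ω => L (x s) ω s) (u s), v s - u s⟫)) :
    -- averaged Hamiltonian gradient condition ⟺ variational inequality
    ((∀ i < N, ∀ ω ∈ U,
        ⟪∫ s in (t i)..(t (i + 1)),
          gradient (fun ψ => ⟪p s, f (x s) ψ s⟫ + p0 * L (x s) ψ s) (u (t i)),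
          ω - u (t i)⟫ ≤ 0)
      ↔ (∀ v, PCU v → ⟪p T, w v T⟫ + p0 * w0 v T ≤ 0)) := by
  classical
  have hT0 : (0:ℝ) ≤ T := hT.le
  -- monotonicity of the partition
  have htm0 : ∀ j, j ≤ N → ∀ i, i ≤ j → t i ≤ t j := by
    intro j
    induction j with
    | zero => intro _ i hi; have : i = 0 := Nat.le_zero.mp hi; rw [this]
    | succ j ih =>
        intro hj i hi
        rcases Nat.lt_succ_iff_lt_or_eq.mp (Nat.lt_succ_of_le hi) with h | h
        · exact le_trans (ih (by omega) i (by omega)) (htmono j (by omega)).le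
        · rw [h]
  have htm : ∀ i j, i ≤ j → j ≤ N → t i ≤ t j := fun i j hij hjN => htm0 j hjN i hij
  have htIcc : ∀ i ≤ N, t i ∈ Icc (0:ℝ) T := fun i hi =>
    ⟨ht0 ▸ htm 0 i (Nat.zero_le _) hi, htN ▸ htm i N hi le_rfl⟩
  obtain ⟨hupc, huU⟩ := (hPCU u).mp hu
  -- the key identity
  have hkey : ∀ v, PCU v → ⟪p T, w v T⟫ + p0 * w0 v T
      = ∑ i ∈ Finset.range N, ⟪∫ s in (t i)..(t (i + 1)),
          gradient (fun ψ => ⟪p s, f (x s) ψ s⟫ + p0 * L (x s) ψ s) (u (t i)),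
          v (t i) - u (t i)⟫ := by
    intro v hv
    obtain ⟨hvpc, hvU⟩ := (hPCU v).mp hv
    set a : ℝ → EuclideanSpace ℝ (Fin n) := fun s =>
      -(gradient (fun y => ⟪p s, f y (u s) s⟫) (x s))
        - p0 • gradient (fun y => L y (u s) s) (x s) with ha_def
    set b : ℝ → EuclideanSpace ℝ (Fin n) := fun s =>
      (fderiv ℝ (fun y => f y (u s) s) (x s)) (w v s)
        + (fderiv ℝ (fun ω => f (x s) ω s) (u s)) (v s - u s) with hb_def
    set c : ℝ → ℝ := fun s =>
      ⟪gradient (fun y => L y (u s) s) (x s), w v s⟫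
        + ⟪gradient (fun ω => L (x s) ω s) (u s), v s - u s⟫ with hc_def
    set g : ℝ → EuclideanSpace ℝ (Fin m) := fun s =>
      gradient (fun ψ => ⟪p s, f (x s) ψ s⟫ + p0 * L (x s) ψ s) (u s) with hg_def
    set Hfun : ℝ → ℝ := fun s => ⟪g s, v s - u s⟫ with hH_def
    have hTmem : T ∈ Icc (0:ℝ) T := ⟨hT0, le_rfl⟩
    have haInt : IntegrableOn a (Ioc 0 T) := hpint.mono_set Ioc_subset_Icc_self
    have hbInt : IntegrableOn b (Ioc 0 T) := (hwint v hv).mono_set Ioc_subset_Icc_self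
    have hcInt : IntegrableOn c (Ioc 0 T) := (hw0int v hv).mono_set Ioc_subset_Icc_self
    have hpT : p T = p 0 + ∫ s in Ioc (0:ℝ) T, a s := by
      rw [hpode T hTmem, intervalIntegral.integral_of_le hT0]
    have hwT : w v T = ∫ s in Ioc (0:ℝ) T, b s := by
      rw [hw v hv T hTmem, intervalIntegral.integral_of_le hT0]
    have hw0T : w0 v T = ∫ s in Ioc (0:ℝ) T, c s := by
      rw [hw0 v hv T hTmem, intervalIntegral.integral_of_le hT0]
    -- pointwise Hamiltonian identity
    have hpoint : ∀ s : ℝ, ⟪a s, w v s⟫ + ⟪p s, b s⟫ + p0 * c s = Hfun s := fun s =>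
      pointwise_H f L hf hL p0 s (p s) (x s) (w v s) (u s) (v s - u s)
    -- integrability of Hfun on each sampling interval and the splitting
    have hsubIcc : ∀ i < N, Ioc (t i) (t (i + 1)) ⊆ Icc (0:ℝ) T := by
      intro i hi
      intro s hs
      exact ⟨le_trans (htIcc i (le_of_lt hi)).1 hs.1.le,
        le_trans hs.2 (htIcc (i + 1) hi).2⟩
    have hIoo : ∀ i < N, ∀ s ∈ Ioo (t i) (t (i + 1)), u s = u (t i) ∧ v s = v (t i) := by
      intro i hi s hs
      exact ⟨hupc i hi s ⟨hs.1.le, hs.2⟩, hvpc i hi s ⟨hs.1.le, hs.2⟩⟩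
    have hHi : ∀ i < N, IntegrableOn Hfun (Ioc (t i) (t (i + 1))) := by
      intro i hi
      have h1 : IntegrableOn (fun s => ⟪v (t i) - u (t i), g s⟫) (Ioc (t i) (t (i + 1))) :=
        (innerSL ℝ (v (t i) - u (t i))).integrable_comp (hHint.mono_set (hsubIcc i hi))
      refine h1.congr ?_
      filter_upwards [ae_Ioo_of_Ioc] with s hs
      obtain ⟨hus, hvs⟩ := hIoo i hi s hs
      show ⟪v (t i) - u (t i), g s⟫ = ⟪g s, v s - u s⟫
      rw [hus, hvs]
      exact real_inner_comm _ _
    have hval : ∀ i < N, (∫ s in Ioc (t i) (t (i + 1)), Hfun s)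
        = ⟪∫ s in (t i)..(t (i + 1)),
            gradient (fun ψ => ⟪p s, f (x s) ψ s⟫ + p0 * L (x s) ψ s) (u (t i)),
            v (t i) - u (t i)⟫ := by
      intro i hi
      set gi : ℝ → EuclideanSpace ℝ (Fin m) := fun s =>
        gradient (fun ψ => ⟪p s, f (x s) ψ s⟫ + p0 * L (x s) ψ s) (u (t i)) with hgi_def
      have hgiInt : IntegrableOn gi (Ioc (t i) (t (i + 1))) := by
        refine (hHint.mono_set (hsubIcc i hi)).congr ?_
        filter_upwards [ae_Ioo_of_Ioc] with s hs
        obtain ⟨hus, _⟩ := hIoo i hi s hs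
        simp [hgi_def, hg_def, hus]
      rw [intervalIntegral.integral_of_le (htmono i hi).le]
      have e1 : ⟪∫ s in Ioc (t i) (t (i + 1)), gi s, v (t i) - u (t i)⟫
          = ∫ s in Ioc (t i) (t (i + 1)), ⟪gi s, v (t i) - u (t i)⟫ := by
        rw [real_inner_comm, ← integral_inner hgiInt]
        exact integral_congr_ae (Eventually.of_forall fun s => real_inner_comm _ _)
      rw [e1]
      refine integral_congr_ae ?_
      filter_upwards [ae_Ioo_of_Ioc] with s hs
      obtain ⟨hus, hvs⟩ := hIoo i hi s hs
      show ⟪g s, v s - u s⟫ = ⟪gi s, v (t i) - u (t i)⟫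
      have hgg : g s = gi s := by simp only [hg_def, hgi_def, hus]
      rw [hgg, hus, hvs]
    -- splitting of the integral over the partition
    have hsplit : ∀ k, k ≤ N → IntegrableOn Hfun (Ioc (t 0) (t k)) ∧
        (∫ s in Ioc (t 0) (t k), Hfun s)
          = ∑ i ∈ Finset.range k, ∫ s in Ioc (t i) (t (i + 1)), Hfun s := by
      intro k
      induction k with
      | zero => intro _; simp
      | succ k ih =>
          intro hk
          obtain ⟨ih1, ih2⟩ := ih (by omega)
          have hun : Ioc (t 0) (t (k + 1)) = Ioc (t 0) (t k) ∪ Ioc (t k) (t (k + 1)) :=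
            (Ioc_union_Ioc_eq_Ioc (htm 0 k (Nat.zero_le _) (by omega))
              (htmono k (by omega)).le).symm
          have hdisj : Disjoint (Ioc (t 0) (t k)) (Ioc (t k) (t (k + 1))) := by
            rw [Set.disjoint_left]
            intro s hs1 hs2
            exact absurd hs1.2 (not_le.mpr hs2.1)
          have hk2 := hHi k (by omega)
          constructor
          · rw [hun]; exact ih1.union hk2
          · rw [hun, setIntegral_union hdisj measurableSet_Ioc ih1 hk2,
              Finset.sum_range_succ, ih2]
    have hHInt : IntegrableOn Hfun (Ioc 0 T) := by
      have := (hsplit N le_rfl).1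
      rwa [ht0, htN] at this
    have hIsum : (∫ s in Ioc (0:ℝ) T, Hfun s)
        = ∑ i ∈ Finset.range N, ⟪∫ s in (t i)..(t (i + 1)),
            gradient (fun ψ => ⟪p s, f (x s) ψ s⟫ + p0 * L (x s) ψ s) (u (t i)),
            v (t i) - u (t i)⟫ := by
      have h2 := (hsplit N le_rfl).2
      rw [ht0, htN] at h2
      rw [h2]
      exact Finset.sum_congr rfl fun i hi => hval i (Finset.mem_range.mp hi)
    -- assemble
    have hc2Int : IntegrableOn (fun s => p0 * c s) (Ioc 0 T) := hcInt.const_mul p0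
    have h1Int : IntegrableOn (fun s => ⟪a s, w v s⟫ + ⟪p s, b s⟫) (Ioc 0 T) := by
      refine IntegrableOn.congr_fun (hHInt.sub hc2Int) (fun s _ => ?_) measurableSet_Ioc
      have := hpoint s
      show Hfun s - p0 * c s = ⟪a s, w v s⟫ + ⟪p s, b s⟫
      linarith
    have hparts := parts_lemma T a b haInt hbInt (p 0)
    have hcongr : (∫ s in Ioc (0:ℝ) T,
        (⟪a s, ∫ r in Ioc (0:ℝ) s, b r⟫ + ⟪p 0 + ∫ r in Ioc (0:ℝ) s, a r, b s⟫))
        = ∫ s in Ioc (0:ℝ) T, (⟪a s, w v s⟫ + ⟪p s, b s⟫) := by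
      refine setIntegral_congr_fun measurableSet_Ioc (fun s hs => ?_)
      have hsmem : s ∈ Icc (0:ℝ) T := ⟨hs.1.le, hs.2⟩
      have e1 : ∫ r in Ioc (0:ℝ) s, b r = w v s := by
        rw [hw v hv s hsmem, intervalIntegral.integral_of_le hs.1.le]
      have e2 : p 0 + ∫ r in Ioc (0:ℝ) s, a r = p s := by
        rw [hpode s hsmem, intervalIntegral.integral_of_le hs.1.le]
      rw [e1, e2]
    have hw0c : p0 * w0 v T = ∫ s in Ioc (0:ℝ) T, p0 * c s := by
      rw [hw0T, integral_const_mul]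
    calc ⟪p T, w v T⟫ + p0 * w0 v T
        = (∫ s in Ioc (0:ℝ) T, (⟪a s, w v s⟫ + ⟪p s, b s⟫))
            + ∫ s in Ioc (0:ℝ) T, p0 * c s := by
          rw [← hcongr, ← hw0c, hpT, hwT, hparts]
      _ = ∫ s in Ioc (0:ℝ) T, ((⟪a s, w v s⟫ + ⟪p s, b s⟫) + p0 * c s) := by
          rw [← integral_add h1Int hc2Int]
      _ = ∫ s in Ioc (0:ℝ) T, Hfun s := by
          refine setIntegral_congr_fun measurableSet_Ioc (fun s _ => ?_)
          have := hpoint s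
          linarith
      _ = _ := hIsum
  -- the equivalence
  constructor
  · intro hgrad v hv
    rw [hkey v hv]
    refine Finset.sum_nonpos fun i hi => ?_
    have hiN := Finset.mem_range.mp hi
    exact hgrad i hiN (v (t i)) ((hPCU v).mp hv |>.2 (t i) (htIcc i hiN.le))
  · intro hineq i hi ω hω
    set v : ℝ → EuclideanSpace ℝ (Fin m) := fun s =>
      if s ∈ Ico (t i) (t (i + 1)) then ω else u s with hv_def
    have htiIco : t i ∈ Ico (t i) (t (i + 1)) := ⟨le_rfl, htmono i hi⟩
    have hdisjIco : ∀ j < N, j ≠ i → ∀ s ∈ Ico (t j) (t (j + 1)), s ∉ Ico (t i) (t (i + 1)) := by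
      intro j hj hji s hs hsmem
      rcases lt_or_gt_of_ne hji with h | h
      · have : t (j + 1) ≤ t i := htm (j + 1) i h hi.le
        exact absurd (lt_of_lt_of_le hs.2 this) (not_lt.mpr hsmem.1)
      · have : t (i + 1) ≤ t j := htm (i + 1) j h hj.le
        exact absurd (lt_of_lt_of_le hsmem.2 this) (not_lt.mpr hs.1)
    have hvP : PCU v := by
      rw [hPCU]
      constructor
      · intro j hj s hs
        by_cases hji : j = i
        · subst hji
          show (if s ∈ Ico (t j) (t (j + 1)) then ω else u s)
            = (if t j ∈ Ico (t j) (t (j + 1)) then ω else u (t j))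
          rw [if_pos hs, if_pos htiIco]
        · have h1 : s ∉ Ico (t i) (t (i + 1)) := hdisjIco j hj hji s hs
          have h2 : t j ∉ Ico (t i) (t (i + 1)) := hdisjIco j hj hji (t j) ⟨le_rfl, htmono j hj⟩
          show (if s ∈ Ico (t i) (t (i + 1)) then ω else u s)
            = (if t j ∈ Ico (t i) (t (i + 1)) then ω else u (t j))
          rw [if_neg h1, if_neg h2]
          exact hupc j hj s hs
      · intro s hs
        by_cases hmem : s ∈ Ico (t i) (t (i + 1))
        · show (if s ∈ Ico (t i) (t (i + 1)) then ω else u s) ∈ U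
          rw [if_pos hmem]; exact hω
        · show (if s ∈ Ico (t i) (t (i + 1)) then ω else u s) ∈ U
          rw [if_neg hmem]; exact huU s hs
    have := hineq v hvP
    rw [hkey v hvP] at this
    have hsum : ∑ j ∈ Finset.range N, ⟪∫ s in (t j)..(t (j + 1)),
        gradient (fun ψ => ⟪p s, f (x s) ψ s⟫ + p0 * L (x s) ψ s) (u (t j)),
        v (t j) - u (t j)⟫
        = ⟪∫ s in (t i)..(t (i + 1)),
            gradient (fun ψ => ⟪p s, f (x s) ψ s⟫ + p0 * L (x s) ψ s) (u (t i)),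
            ω - u (t i)⟫ := by
      rw [Finset.sum_eq_single i]
      · have hvti : v (t i) = ω := by
          show (if t i ∈ Ico (t i) (t (i + 1)) then ω else u (t i)) = ω
          rw [if_pos htiIco]
        rw [hvti]
      · intro j hj hji
        have hjN := Finset.mem_range.mp hj
        have h2 : t j ∉ Ico (t i) (t (i + 1)) :=
          hdisjIco j hjN hji (t j) ⟨le_rfl, htmono j hjN⟩
        have hvtj : v (t j) = u (t j) := by
          show (if t j ∈ Ico (t i) (t (i + 1)) then ω else u (t j)) = u (t j)
          rw [if_neg h2]
        rw [hvtj]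
        simp
      · intro hnotin
        exact absurd (Finset.mem_range.mpr hi) hnotin
    rw [hsum] at this
    exact this
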